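/- For every real t with |t| < 1/4, one has H₁(t) = (2(16t²−1)·K(4t) + 4·E(4t))/π, where H₁(t) = ∑_{n≥0} (((−1/2)^{↑n})² / (n!)²) · (16t²)ⁿ, K(k) = ∫_0^{π/2} dθ/√(1−k² sin²θ) and E(k) = ∫_0^{π/2} √(1−k² sin²θ) dθ. -/

import Mathlib

open Real

/-- generic binomial series -/
theorem binom_hasSum (a : ℝ) (b : ℕ → ℝ) (hb0 : b 0 = 1)
    (hbs : ∀ n : ℕ, b (n+1) * (n+1) = b n * (a + n))
    (hb1 : ∀ n, |b n| ≤ 1) (x : ℝ) (hx : |x| < 1) :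
    HasSum (fun n => b n * x ^ n) ((1 - x) ^ (-a) : ℝ) := by
  -- summability at any |y| < 1
  have hsummable : ∀ y : ℝ, |y| < 1 → Summable (fun n => b n * y ^ n) := by
    intro y hy
    refine Summable.of_norm_bounded (summable_geometric_of_lt_one (abs_nonneg y) hy) ?_
    intro n
    rw [norm_mul, norm_pow]
    calc ‖b n‖ * ‖y‖ ^ n ≤ 1 * ‖y‖ ^ n := by
          exact mul_le_mul_of_nonneg_right (hb1 n) (by positivity)
      _ = |y| ^ n := by simp [Real.norm_eq_abs]
  set r : ℝ := (|x| + 1) / 2 with hr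
  have hxr : |x| < r := by rw [hr]; linarith
  have hr0 : 0 < r := lt_of_le_of_lt (abs_nonneg x) hxr
  have hr1 : r < 1 := by rw [hr]; linarith
  set s : Set ℝ := Metric.ball (0 : ℝ) r with hs
  have hmem : ∀ y : ℝ, y ∈ s ↔ |y| < r := by
    intro y; simp [hs, Real.dist_eq]
  have hso : IsOpen s := Metric.isOpen_ball
  have hsc : Convex ℝ s := convex_ball 0 r
  have h0s : (0 : ℝ) ∈ s := (hmem 0).2 (by simpa using hr0)
  have hxs : x ∈ s := (hmem x).2 hxr
  -- derivative bound
  set u : ℕ → ℝ := fun n => (n : ℝ) * r ^ (n - 1) with hu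
  have hu_sum : Summable u := by
    rw [← summable_nat_add_iff 1]
    have h1 : Summable (fun n : ℕ => (n : ℝ) * r ^ n) := by
      simpa using summable_pow_mul_geometric_of_norm_lt_one 1
        (by rwa [Real.norm_eq_abs, abs_of_pos hr0] : ‖r‖ < 1)
    have h2 : Summable (fun n : ℕ => r ^ n) := summable_geometric_of_lt_one hr0.le hr1
    have := h1.add h2
    refine this.congr ?_
    intro n
    show (n:ℝ) * r ^ n + r ^ n = u (n+1)
    simp only [hu, Nat.add_sub_cancel]
    push_cast
    ring
  set g : ℕ → ℝ → ℝ := fun n y => b n * y ^ n with hg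
  set g' : ℕ → ℝ → ℝ := fun n y => b n * ((n : ℝ) * y ^ (n - 1)) with hg'
  have hderiv : ∀ (n : ℕ) (y : ℝ), y ∈ s → HasDerivAt (g n) (g' n y) y := by
    intro n y _
    exact (hasDerivAt_pow n y).const_mul (b n)
  have hbound : ∀ (n : ℕ) (y : ℝ), y ∈ s → ‖g' n y‖ ≤ u n := by
    intro n y hy
    rw [hg', Real.norm_eq_abs, abs_mul, abs_mul, abs_pow]
    have h1 : |y| ^ (n - 1) ≤ r ^ (n - 1) :=
      pow_le_pow_left₀ (abs_nonneg y) ((hmem y).1 hy).le _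
    calc |b n| * (|(n : ℝ)| * |y| ^ (n - 1)) ≤ 1 * (|(n : ℝ)| * r ^ (n - 1)) := by
          refine mul_le_mul (hb1 n) ?_ (by positivity) zero_le_one
          exact mul_le_mul_of_nonneg_left h1 (abs_nonneg _)
      _ = u n := by
          simp only [hu, one_mul]
          rw [abs_of_nonneg (by positivity : (0:ℝ) ≤ (n:ℝ))]
  have hsum0 : Summable fun n => g n 0 := hsummable 0 (by norm_num)
  set f : ℝ → ℝ := fun y => ∑' n, g n y with hf
  set D : ℝ → ℝ := fun y => ∑' n, g' n y with hD
  have hfd : ∀ y ∈ s, HasDerivAt f (D y) y := by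
    intro y hy
    exact hasDerivAt_tsum_of_isPreconnected hu_sum hso hsc.isPreconnected
      hderiv hbound h0s hsum0 hy
  -- the ODE : (1-y) * D y = a * f y on s
  have hODE : ∀ y ∈ s, (1 - y) * D y = a * f y := by
    intro y hy
    have hyr : |y| < r := (hmem y).1 hy
    have hy1 : |y| < 1 := hyr.trans hr1
    have hS1 : Summable (fun n => g' n y) :=
      Summable.of_norm_bounded hu_sum (fun n => hbound n y hy)
    have hshift : D y = ∑' (n : ℕ), g' (n + 1) y := by
      show (∑' (n : ℕ), g' n y) = ∑' (n : ℕ), g' (n + 1) y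
      rw [hS1.tsum_eq_zero_add]
      simp [hg']
    have hterm : ∀ n : ℕ, g' (n + 1) y = a * (b n * y ^ n) + (n : ℝ) * (b n * y ^ n) := by
      intro n
      have h1 : b (n + 1) * (n + 1) = b n * (a + n) := hbs n
      rw [hg']
      simp only [Nat.add_sub_cancel]
      have : b (n + 1) * (((n : ℝ) + 1) * y ^ n) = (b (n+1) * ((n:ℝ)+1)) * y ^ n := by ring
      push_cast
      rw [this, h1]
      ring
    have hSf : Summable (fun n => b n * y ^ n) := hsummable y hy1
    have hSn : Summable (fun n : ℕ => (n : ℝ) * (b n * y ^ n)) := by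
      refine Summable.of_norm_bounded (g := fun n : ℕ => (n : ℝ) * |y| ^ n) ?_ ?_
      · simpa using summable_pow_mul_geometric_of_norm_lt_one 1
          (r := |y|) (by rwa [Real.norm_eq_abs, abs_abs])
      · intro n
        rw [Real.norm_eq_abs, abs_mul, abs_mul, abs_pow,
          abs_of_nonneg (by positivity : (0:ℝ) ≤ (n:ℝ))]
        refine mul_le_mul_of_nonneg_left ?_ (by positivity)
        calc |b n| * |y| ^ n ≤ 1 * |y| ^ n :=
              mul_le_mul_of_nonneg_right (hb1 n) (by positivity)
          _ = |y| ^ n := one_mul _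
    have hsum_split : D y = a * f y + ∑' (n : ℕ), (n : ℝ) * (b n * y ^ n) := by
      rw [hshift]
      have : (fun n : ℕ => g' (n+1) y) = fun n : ℕ => a * (b n * y ^ n) + (n : ℝ) * (b n * y ^ n) := by
        funext n; exact hterm n
      rw [this, Summable.tsum_add (hSf.mul_left a) hSn, tsum_mul_left]
    -- ∑' n * b n y^n = y * D y
    have hyD : ∑' (n : ℕ), (n : ℝ) * (b n * y ^ n) = y * D y := by
      have h2 : y * D y = ∑' (n : ℕ), y * g' n y := by
        show y * (∑' (n : ℕ), g' n y) = _
        exact tsum_mul_left.symm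
      rw [h2]
      refine tsum_congr fun n => ?_
      cases n with
      | zero => simp [hg']
      | succ k =>
        simp only [hg', Nat.add_sub_cancel]
        push_cast
        ring
    have hkey : D y = a * f y + y * D y := by rw [hyD] at hsum_split; exact hsum_split
    linear_combination hkey
  -- h y = f y * (1 - y) ^ a is constant on s
  set h : ℝ → ℝ := fun y => f y * (1 - y) ^ a with hh
  have hpos : ∀ y ∈ s, (0:ℝ) < 1 - y := by
    intro y hy
    have h1 := (hmem y).1 hy
    have h2 : y < 1 := lt_of_le_of_lt (le_abs_self y) (h1.trans hr1)
    linarith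
  have hhd : ∀ y ∈ s, HasDerivAt h 0 y := by
    intro y hy
    have h1 : HasDerivAt (fun y : ℝ => 1 - y) (-1) y := by
      simpa using (hasDerivAt_id y).const_sub 1
    have h2 : HasDerivAt (fun y : ℝ => (1 - y) ^ a) ((-1) * a * (1 - y) ^ (a - 1)) y :=
      h1.rpow_const (Or.inl (hpos y hy).ne')
    have h3 := (hfd y hy).mul h2
    have h4 : (1 - y) ^ a = (1 - y) ^ (a - 1) * (1 - y) := by
      rw [← Real.rpow_add_one (hpos y hy).ne' (a - 1)]
      norm_num
    have h5 := hODE y hy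
    convert h3 using 1
    · rfl
    · rfl
    · rfl
    rw [h4]
    linear_combination (-(1 - y) ^ (a - 1)) * h5
  have hconst : h x = h 0 := by
    refine hsc.is_const_of_fderivWithin_eq_zero
      (fun y hy => ((hhd y hy).differentiableAt).differentiableWithinAt) ?_ hxs h0s
    intro y hy
    rw [fderivWithin_of_isOpen hso hy]
    have h6 : HasFDerivAt h (ContinuousLinearMap.smulRight (1 : ℝ →L[ℝ] ℝ) (0:ℝ)) y :=
      hasDerivAt_iff_hasFDerivAt.mp (hhd y hy)
    rw [h6.fderiv]
    ext
    simp
  have hf0v : f 0 = 1 := by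
    show (∑' n : ℕ, g n 0) = 1
    rw [tsum_eq_single 0 (by intro n hn; simp [hg, zero_pow hn])]
    simp [hg, hb0]
  have hh0 : h 0 = 1 := by simp [hh, hf0v]
  have h1x : (0:ℝ) < 1 - x := hpos x hxs
  have hhx : f x * (1 - x) ^ a = 1 := hconst.trans hh0
  have hfx : f x = (1 - x) ^ (-a) := by
    rw [Real.rpow_neg h1x.le]
    exact eq_inv_of_mul_eq_one_left hhx
  have hsx := (hsummable x hx).hasSum
  have heq : (∑' n : ℕ, b n * x ^ n) = (1 - x) ^ (-a) := by
    rw [← hfx]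
  rwa [heq] at hsx

noncomputable def ccc (n : ℕ) : ℝ := (ascPochhammer ℝ n).eval (1/2 : ℝ) / n.factorial
noncomputable def eee (n : ℕ) : ℝ := (ascPochhammer ℝ n).eval (-(1/2) : ℝ) / n.factorial

lemma ccc_zero : ccc 0 = 1 := by simp [ccc]
lemma eee_zero : eee 0 = 1 := by simp [eee]

lemma fact_ne (n : ℕ) : ((n.factorial : ℝ)) ≠ 0 := by
  exact_mod_cast n.factorial_ne_zero

lemma ccc_rec (n : ℕ) : ccc (n+1) * (n+1) = ccc n * (1/2 + n) := by
  simp only [ccc, ascPochhammer_succ_eval, Nat.factorial_succ]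
  have h1 := fact_ne n
  have h2 : ((n:ℝ) + 1) ≠ 0 := by positivity
  push_cast
  field_simp

lemma eee_rec (n : ℕ) : eee (n+1) * (n+1) = eee n * (-(1/2) + n) := by
  simp only [eee, ascPochhammer_succ_eval, Nat.factorial_succ]
  have h1 := fact_ne n
  have h2 : ((n:ℝ) + 1) ≠ 0 := by positivity
  push_cast
  field_simp

lemma ccc_succ (n : ℕ) : ccc (n+1) = ccc n * ((2*n+1) / (2*n+2)) := by
  have h := ccc_rec n
  have h2 : ((n:ℝ) + 1) ≠ 0 := by positivity
  field_simp at h ⊢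
  linarith [h]

lemma eee_succ (n : ℕ) : eee (n+1) = eee n * ((2*(n:ℝ)-1) / (2*n+2)) := by
  have h := eee_rec n
  have h2 : ((n:ℝ) + 1) ≠ 0 := by positivity
  field_simp at h ⊢
  linarith [h]

lemma ccc_pos (n : ℕ) : 0 < ccc n := by
  induction n with
  | zero => rw [ccc_zero]; norm_num
  | succ k ih =>
    rw [ccc_succ]
    have : (0:ℝ) < (2*k+1)/(2*k+2) := by positivity
    positivity

lemma ccc_le_one (n : ℕ) : ccc n ≤ 1 := by
  induction n with
  | zero => rw [ccc_zero]
  | succ k ih =>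
    rw [ccc_succ]
    have h1 : ((2*(k:ℝ)+1)/(2*k+2)) ≤ 1 := by
      rw [div_le_one (by positivity)]; linarith
    calc ccc k * ((2*(k:ℝ)+1)/(2*k+2)) ≤ 1 * 1 := by
          exact mul_le_mul ih h1 (by positivity) zero_le_one
      _ = 1 := by norm_num

lemma ccc_abs_le (n : ℕ) : |ccc n| ≤ 1 := by
  rw [abs_of_pos (ccc_pos n)]; exact ccc_le_one n

lemma eee_abs_le (n : ℕ) : |eee n| ≤ 1 := by
  induction n with
  | zero => rw [eee_zero]; norm_num
  | succ k ih =>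
    rw [eee_succ, abs_mul, abs_div]
    have h1 : |2*(k:ℝ)-1| ≤ 2*(k:ℝ)+2 := by
      rw [abs_le]
      constructor <;> nlinarith [Nat.cast_nonneg (α := ℝ) k]
    have h2 : |2*(k:ℝ)+2| = 2*(k:ℝ)+2 := abs_of_pos (by positivity)
    have h3 : |2*(k:ℝ)-1| / |2*(k:ℝ)+2| ≤ 1 := by
      rw [h2, div_le_one (by positivity)]; linarith
    calc |eee k| * (|2*(k:ℝ)-1| / |2*(k:ℝ)+2|) ≤ 1 * 1 :=
          mul_le_mul ih h3 (by positivity) zero_le_one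
      _ = 1 := by norm_num

lemma ccc_prod (n : ℕ) : ccc n = ∏ i ∈ Finset.range n, (2*(i:ℝ)+1)/(2*i+2) := by
  induction n with
  | zero => simp [ccc_zero]
  | succ k ih => rw [Finset.prod_range_succ, ← ih, ccc_succ]

lemma eee_succ_eq (n : ℕ) : eee (n+1) = - ccc n / (2*n+2) := by
  induction n with
  | zero =>
    rw [eee_succ, eee_zero, ccc_zero]
    norm_num
  | succ k ih =>
    rw [eee_succ, ih, ccc_succ]
    have h2 : (2*(k:ℝ)+2) ≠ 0 := by positivity
    have h3 : (2*((k:ℝ)+1)+2) ≠ 0 := by positivity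
    push_cast
    field_simp
    ring_nf
    try exact Or.inl trivial

lemma ccc_sub_eee (n : ℕ) : ccc (n+1) - eee (n+1) = ccc n := by
  rw [eee_succ_eq, ccc_succ]
  have h2 : (2*(n:ℝ)+2) ≠ 0 := by positivity
  field_simp
  ring
section B3
open MeasureTheory intervalIntegral

lemma sin_pow_halfpi (n : ℕ) :
    ∫ θ in (0:ℝ)..(π/2), Real.sin θ ^ (2*n) = (π/2) * ccc n := by
  have h1 : (∫ x in (0:ℝ)..π, Real.sin x ^ (2*n))
      = π * ∏ i ∈ Finset.range n, (2*(i:ℝ)+1)/(2*i+2) := integral_sin_pow_even n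
  have hcont : Continuous (fun x : ℝ => Real.sin x ^ (2*n)) := by fun_prop
  have h2 : (∫ x in (0:ℝ)..(π/2), Real.sin x ^ (2*n))
      = ∫ x in (π/2:ℝ)..π, Real.sin x ^ (2*n) := by
    have h3 := intervalIntegral.integral_comp_sub_left
      (a := (0:ℝ)) (b := π/2) (fun x => Real.sin x ^ (2*n)) π
    have h4 : (∫ x in (0:ℝ)..(π/2), Real.sin (π - x) ^ (2*n))
        = ∫ x in (0:ℝ)..(π/2), Real.sin x ^ (2*n) := by
      apply intervalIntegral.integral_congr
      intro x _
      simp [Real.sin_pi_sub]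
    rw [h4] at h3
    rw [h3]
    have h5 : π - π/2 = π/2 := by ring
    rw [h5, sub_zero]
  have h5 : (∫ x in (0:ℝ)..(π/2), Real.sin x ^ (2*n))
      + (∫ x in (π/2:ℝ)..π, Real.sin x ^ (2*n))
      = ∫ x in (0:ℝ)..π, Real.sin x ^ (2*n) :=
    intervalIntegral.integral_add_adjacent_intervals
      (hcont.intervalIntegrable _ _) (hcont.intervalIntegrable _ _)
  rw [ccc_prod]
  rw [h1, ← h2] at h5
  linarith

lemma elliptic_series (m : ℝ) (hm0 : 0 ≤ m) (hm1 : m < 1) (b : ℕ → ℝ)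
    (hb1 : ∀ n, |b n| ≤ 1) (G : ℝ → ℝ)
    (hG : ∀ x : ℝ, 0 ≤ x → x < 1 → HasSum (fun n => b n * x ^ n) (G x)) :
    HasSum (fun n => (π/2) * (b n * ccc n * m ^ n))
      (∫ θ in (0:ℝ)..(π/2), G (m * Real.sin θ ^ 2)) := by
  set s : Set ℝ := Set.Ioc (0:ℝ) (π/2) with hsdef
  set F : ℕ → ℝ → ℝ := fun n θ => b n * (m * Real.sin θ ^ 2) ^ n with hF
  have hxm : ∀ θ : ℝ, 0 ≤ m * Real.sin θ ^ 2 ∧ m * Real.sin θ ^ 2 < 1 := by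
    intro θ
    constructor
    · positivity
    · have h1 : Real.sin θ ^ 2 ≤ 1 := Real.sin_sq_le_one θ
      nlinarith
  have hFc : ∀ n, Continuous (F n) := by intro n; fun_prop
  have h_int : ∀ n, Integrable (F n) (volume.restrict s) := by
    intro n
    exact ((hFc n).integrableOn_Ioc : IntegrableOn (F n) s volume)
  have hsm : volume s < ⊤ := by
    rw [hsdef, Real.volume_Ioc]
    exact ENNReal.ofReal_lt_top
  have hstoReal : (volume s).toReal = π/2 := by
    rw [hsdef, Real.volume_Ioc, sub_zero, ENNReal.toReal_ofReal (by positivity : (0:ℝ) ≤ π/2)]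
  have hFle : ∀ n, ∀ θ : ℝ, ‖F n θ‖ ≤ m ^ n := by
    intro n θ
    obtain ⟨hx0, _⟩ := hxm θ
    have hFr : F n θ = b n * (m * Real.sin θ ^ 2) ^ n := rfl
    rw [Real.norm_eq_abs, hFr, abs_mul, abs_pow, abs_of_nonneg hx0]
    have h1 : m * Real.sin θ ^ 2 ≤ m := by nlinarith [Real.sin_sq_le_one θ]
    calc |b n| * (m * Real.sin θ ^ 2) ^ n ≤ 1 * m ^ n := by
          exact mul_le_mul (hb1 n) (pow_le_pow_left₀ hx0 h1 n) (by positivity) zero_le_one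
      _ = m ^ n := one_mul _
  have h_norm : Summable fun n => ∫ θ, ‖F n θ‖ ∂(volume.restrict s) := by
    refine Summable.of_nonneg_of_le (fun n => integral_nonneg fun θ => norm_nonneg _)
      (fun n => ?_) ((summable_geometric_of_lt_one hm0 hm1).mul_left (π/2))
    have h2 : ‖∫ θ in s, ‖F n θ‖ ∂volume‖ ≤ m ^ n * (volume s).toReal := by
      refine norm_setIntegral_le_of_norm_le_const hsm (fun θ _ => ?_)
      · rw [Real.norm_eq_abs, abs_of_nonneg (norm_nonneg _)]
        exact hFle n θ
    calc (∫ θ, ‖F n θ‖ ∂(volume.restrict s)) ≤ ‖∫ θ in s, ‖F n θ‖ ∂volume‖ :=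
          le_abs_self _
      _ ≤ m ^ n * (volume s).toReal := h2
      _ = π/2 * m ^ n := by rw [hstoReal]; ring
  have hkey := hasSum_integral_of_summable_integral_norm h_int h_norm
  have h_tsum_eq : (∫ θ, (∑' n, F n θ) ∂(volume.restrict s))
      = ∫ θ in (0:ℝ)..(π/2), G (m * Real.sin θ ^ 2) := by
    rw [intervalIntegral.integral_of_le (by positivity : (0:ℝ) ≤ π/2)]
    apply MeasureTheory.integral_congr_ae
    filter_upwards with θ
    obtain ⟨hx0, hx1⟩ := hxm θ
    exact (hG _ hx0 hx1).tsum_eq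
  rw [h_tsum_eq] at hkey
  have h_each : ∀ n, (∫ θ, F n θ ∂(volume.restrict s)) = (π/2) * (b n * ccc n * m ^ n) := by
    intro n
    have h7 : (∫ θ, F n θ ∂(volume.restrict s)) = ∫ θ in (0:ℝ)..(π/2), F n θ := by
      rw [intervalIntegral.integral_of_le (by positivity : (0:ℝ) ≤ π/2)]
    have h8 : (fun θ => F n θ) = fun θ => (b n * m ^ n) * Real.sin θ ^ (2*n) := by
      funext θ
      show b n * (m * Real.sin θ ^ 2) ^ n = _
      rw [mul_pow, pow_mul]
      ring
    rw [h7, h8, intervalIntegral.integral_const_mul, sin_pow_halfpi]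
    ring
  have h9 : (fun n => (π/2) * (b n * ccc n * m ^ n))
      = fun n => ∫ θ, F n θ ∂(volume.restrict s) := funext fun n => (h_each n).symm
  rw [h9]
  exact hkey

end B3

lemma hasSum_Kser (x : ℝ) (h0 : 0 ≤ x) (h1 : x < 1) :
    HasSum (fun n => ccc n * x ^ n) (1 / Real.sqrt (1 - x)) := by
  have h := binom_hasSum (1/2) ccc ccc_zero (fun n => ccc_rec n) ccc_abs_le x
    (by rw [abs_of_nonneg h0]; exact h1)
  have h2 : ((1 - x) ^ (-(1/2 : ℝ)) : ℝ) = 1 / Real.sqrt (1 - x) := by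
    rw [Real.rpow_neg (by linarith : (0:ℝ) ≤ 1 - x), ← Real.sqrt_eq_rpow, one_div]
  rwa [h2] at h

lemma hasSum_Eser (x : ℝ) (h0 : 0 ≤ x) (h1 : x < 1) :
    HasSum (fun n => eee n * x ^ n) (Real.sqrt (1 - x)) := by
  have h := binom_hasSum (-(1/2)) eee eee_zero (fun n => eee_rec n) eee_abs_le x
    (by rw [abs_of_nonneg h0]; exact h1)
  have h2 : ((1 - x) ^ (-(-(1/2 : ℝ))) : ℝ) = Real.sqrt (1 - x) := by
    rw [neg_neg, ← Real.sqrt_eq_rpow]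
  rwa [h2] at h

/-- For `|t| < 1/4`, `H₁(t) = (2(16t²−1)K(4t) + 4E(4t))/π`, where `K` and `E` are the
complete elliptic integrals of the first and second kind. -/
theorem stmt_11 (t : ℝ) (ht : |t| < 1 / 4) :
    (∑' n : ℕ,
      ((ascPochhammer ℝ n).eval (-(1 / 2) : ℝ)) ^ 2 / ((n.factorial : ℝ)) ^ 2 *
        (16 * t ^ 2) ^ n) =
      (2 * (16 * t ^ 2 - 1) *
          (∫ θ in (0 : ℝ)..(π / 2), 1 / Real.sqrt (1 - (4 * t) ^ 2 * Real.sin θ ^ 2)) +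
        4 * (∫ θ in (0 : ℝ)..(π / 2), Real.sqrt (1 - (4 * t) ^ 2 * Real.sin θ ^ 2))) / π := by
  have habs := abs_lt.mp ht
  set m : ℝ := 16 * t ^ 2 with hm
  have hm0 : 0 ≤ m := by positivity
  have hm1 : m < 1 := by rw [hm]; nlinarith [habs.1, habs.2]
  set IK : ℝ := ∫ θ in (0:ℝ)..(π/2), 1 / Real.sqrt (1 - m * Real.sin θ ^ 2) with hIK
  set IE : ℝ := ∫ θ in (0:ℝ)..(π/2), Real.sqrt (1 - m * Real.sin θ ^ 2) with hIE
  have hpi : (π:ℝ) ≠ 0 := Real.pi_ne_zero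
  have hKsum : HasSum (fun n => (π/2) * (ccc n * ccc n * m ^ n)) IK := by
    have h := elliptic_series m hm0 hm1 ccc ccc_abs_le (fun x => 1 / Real.sqrt (1 - x))
      (fun x h0 h1 => hasSum_Kser x h0 h1)
    exact h
  have hEsum : HasSum (fun n => (π/2) * (eee n * ccc n * m ^ n)) IE := by
    have h := elliptic_series m hm0 hm1 eee eee_abs_le (fun x => Real.sqrt (1 - x))
      (fun x h0 h1 => hasSum_Eser x h0 h1)
    exact h
  have hA : HasSum (fun n => ccc n ^ 2 * m ^ n) (2/π * IK) := by
    have h := hKsum.mul_left (2/π)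
    convert h using 1
    · rfl
    funext n
    field_simp
  have hB : HasSum (fun n => eee n * ccc n * m ^ n) (2/π * IE) := by
    have h := hEsum.mul_left (2/π)
    convert h using 1
    · rfl
    funext n
    field_simp
  have h1 : HasSum (fun n => (ccc (n+1) - eee (n+1)) ^ 2 * m ^ (n+1)) (m * (2/π * IK)) := by
    have h := hA.mul_left m
    convert h using 1
    · rfl
    funext n
    rw [ccc_sub_eee]
    ring
  have hShift : HasSum (fun n => (ccc n - eee n) ^ 2 * m ^ n) (m * (2/π * IK)) := by
    apply (hasSum_nat_add_iff' (f := fun n => (ccc n - eee n) ^ 2 * m ^ n) 1).mp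
    convert h1 using 1
    · rfl
    simp [ccc_zero, eee_zero]
  have hT : HasSum (fun n => eee n ^ 2 * m ^ n)
      (m * (2/π * IK) - 2/π * IK + 2 * (2/π * IE)) := by
    have h := (hShift.sub hA).add (hB.mul_left 2)
    convert h using 1
    · rfl
    funext n
    ring
  have hL : (∑' n : ℕ,
      ((ascPochhammer ℝ n).eval (-(1 / 2) : ℝ)) ^ 2 / ((n.factorial : ℝ)) ^ 2 * m ^ n)
      = ∑' n : ℕ, eee n ^ 2 * m ^ n := by
    apply tsum_congr
    intro n
    congr 1
    rw [eee, div_pow]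
  rw [hL, hT.tsum_eq]
  have hiK : (∫ θ in (0:ℝ)..(π/2), 1 / Real.sqrt (1 - (4*t)^2 * Real.sin θ ^ 2)) = IK := by
    rw [hIK]
    apply intervalIntegral.integral_congr
    intro θ _
    rw [show (4*t)^2 = m by rw [hm]; ring]
  have hiE : (∫ θ in (0:ℝ)..(π/2), Real.sqrt (1 - (4*t)^2 * Real.sin θ ^ 2)) = IE := by
    rw [hIE]
    apply intervalIntegral.integral_congr
    intro θ _
    rw [show (4*t)^2 = m by rw [hm]; ring]
  rw [hiK, hiE]
  field_simp
  ring
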